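/- Let n ≥ 1, x₀ ∈ ℝⁿ, κ > 0 and λ > 0. Let w : ℝⁿ → ℝ be convex, twice continuously differentiable on an open neighborhood of the closed ball B̄(x₀, κ), with Hessian satisfying Hess w(x) ≥ λ·Id (as quadratic forms) for all x ∈ B̄(x₀, κ), and suppose w attains its global minimum over ℝⁿ at x₀. Let w' : ℝⁿ → ℝ be convex with |w(x) − w'(x)| ≤ λκ²/16 for all x ∈ B̄(x₀, κ). Then w' attains its global minimum over ℝⁿ at some point of the open ball B(x₀, κ). -/

import Mathlib

open Metric

-- sphere lower bound lemma
theorem sphere_lb {E : Type*} [NormedAddCommGroup E] [NormedSpace ℝ E]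
    (x₀ : E) (κ lam : ℝ) (hκ : 0 < κ) (hlam : 0 < lam)
    (w : E → ℝ)
    (U : Set E) (hUopen : IsOpen U) (hUsub : closedBall x₀ κ ⊆ U)
    (hC2 : ContDiffOn ℝ 2 w U)
    (hhess : ∀ x ∈ closedBall x₀ κ, ∀ v : E,
      lam * ‖v‖ ^ 2 ≤ iteratedFDeriv ℝ 2 w x ![v, v])
    (hmin : ∀ x, w x₀ ≤ w x)
    (z : E) (hz : dist z x₀ = κ) :
    w x₀ + lam * κ ^ 2 / 2 ≤ w z := by
  have hx₀U : x₀ ∈ U := hUsub (mem_closedBall_self hκ.le)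
  have hwd : DifferentiableOn ℝ w U := hC2.differentiableOn two_ne_zero
  have hfd : ContDiffOn ℝ 1 (fderiv ℝ w) U := by
    exact hC2.fderiv_of_isOpen hUopen (by norm_num)
  have hfdd : DifferentiableOn ℝ (fderiv ℝ w) U := hfd.differentiableOn one_ne_zero
  -- fderiv at x₀ is 0
  have hderiv0 : fderiv ℝ w x₀ = 0 := by
    apply IsLocalMin.fderiv_eq_zero
    exact Filter.Eventually.of_forall hmin
  set v := z - x₀ with hv
  have hnv : ‖v‖ = κ := by rw [hv, ← dist_eq_norm]; exact hz
  set c : ℝ → E := fun t => x₀ + t • v with hc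
  have hcmem : ∀ t ∈ Set.Icc (0:ℝ) 1, c t ∈ closedBall x₀ κ := by
    intro t ht
    simp only [hc, mem_closedBall, dist_eq_norm, add_sub_cancel_left, norm_smul,
      Real.norm_eq_abs, abs_of_nonneg ht.1, hnv]
    nlinarith [ht.1, ht.2]
  have hcU : ∀ t ∈ Set.Icc (0:ℝ) 1, c t ∈ U := fun t ht => hUsub (hcmem t ht)
  have hcd : ∀ t : ℝ, HasDerivAt c v t := by
    intro t
    have h := ((hasDerivAt_id t).smul_const v).const_add x₀
    simp only [one_smul] at h
    exact h
  set g' : ℝ → ℝ := fun t => fderiv ℝ w (c t) v with hg'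
  set g'' : ℝ → ℝ := fun t => fderiv ℝ (fderiv ℝ w) (c t) v v with hg''
  have hgd : ∀ t ∈ Set.Icc (0:ℝ) 1, HasDerivAt (w ∘ c) (g' t) t := by
    intro t ht
    exact ((hwd.differentiableAt (hUopen.mem_nhds (hcU t ht))).hasFDerivAt).comp_hasDerivAt t (hcd t)
  have hg'd : ∀ t ∈ Set.Icc (0:ℝ) 1, HasDerivAt g' (g'' t) t := by
    intro t ht
    have h1 : HasFDerivAt (fderiv ℝ w) (fderiv ℝ (fderiv ℝ w) (c t)) (c t) :=
      (hfdd.differentiableAt (hUopen.mem_nhds (hcU t ht))).hasFDerivAt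
    have h2 := ((ContinuousLinearMap.apply ℝ ℝ v).hasFDerivAt.comp (c t) h1).comp_hasDerivAt t (hcd t)
    exact h2
  have hg''lb : ∀ t ∈ Set.Icc (0:ℝ) 1, lam * κ ^ 2 ≤ g'' t := by
    intro t ht
    have := hhess (c t) (hcmem t ht) v
    rw [iteratedFDeriv_two_apply] at this
    simpa [hnv] using this
  have hg'0 : g' 0 = 0 := by
    simp [hg', hc, hderiv0]
  have hIcc : Set.Ioo (0:ℝ) 1 ⊆ Set.Icc 0 1 := Set.Ioo_subset_Icc_self
  have hint : interior (Set.Icc (0:ℝ) 1) = Set.Ioo 0 1 := interior_Icc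
  -- G₂ = g' t - lam κ² t is monotone on [0,1]
  set G₂ : ℝ → ℝ := fun t => g' t - lam * κ ^ 2 * t with hG₂
  have hG₂d : ∀ t ∈ Set.Icc (0:ℝ) 1, HasDerivAt G₂ (g'' t - lam * κ ^ 2) t := by
    intro t ht
    have h := (hg'd t ht).sub ((hasDerivAt_id t).const_mul (lam * κ ^ 2))
    simp only [mul_one] at h
    exact h
  have hG₂mono : MonotoneOn G₂ (Set.Icc (0:ℝ) 1) := by
    apply monotoneOn_of_deriv_nonneg (convex_Icc 0 1)
    · exact fun t ht => (hG₂d t ht).continuousAt.continuousWithinAt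
    · rw [hint]; exact fun t ht => (hG₂d t (hIcc ht)).differentiableAt.differentiableWithinAt
    · rw [hint]; intro t ht
      rw [(hG₂d t (hIcc ht)).deriv]
      linarith [hg''lb t (hIcc ht)]
  have hg'lb : ∀ t ∈ Set.Icc (0:ℝ) 1, lam * κ ^ 2 * t ≤ g' t := by
    intro t ht
    have := hG₂mono (Set.left_mem_Icc.2 zero_le_one) ht ht.1
    simp only [hG₂, hg'0, mul_zero, sub_zero, zero_sub, neg_nonpos] at this
    linarith [this]
  -- F = g t - lam κ²/2 t² is monotone on [0,1]
  set F : ℝ → ℝ := fun t => w (c t) - lam * κ ^ 2 / 2 * t ^ 2 with hF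
  have hFd : ∀ t ∈ Set.Icc (0:ℝ) 1, HasDerivAt F (g' t - lam * κ ^ 2 * t) t := by
    intro t ht
    have h2 : HasDerivAt (fun t : ℝ => lam * κ ^ 2 / 2 * t ^ 2) (lam * κ ^ 2 * t) t := by
      have := (hasDerivAt_pow 2 t).const_mul (lam * κ ^ 2 / 2)
      refine this.congr_deriv ?_
      simp only [Nat.cast_ofNat, show (2:ℕ) - 1 = 1 from rfl, pow_one]; ring
    exact (hgd t ht).sub h2
  have hFmono : MonotoneOn F (Set.Icc (0:ℝ) 1) := by
    apply monotoneOn_of_deriv_nonneg (convex_Icc 0 1)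
    · exact fun t ht => (hFd t ht).continuousAt.continuousWithinAt
    · rw [hint]; exact fun t ht => (hFd t (hIcc ht)).differentiableAt.differentiableWithinAt
    · rw [hint]; intro t ht
      rw [(hFd t (hIcc ht)).deriv]
      linarith [hg'lb t (hIcc ht)]
  have := hFmono (Set.left_mem_Icc.2 zero_le_one) (Set.right_mem_Icc.2 zero_le_one) zero_le_one
  have hc0 : c 0 = x₀ := by simp [hc]
  have hc1 : c 1 = z := by simp [hc, hv]
  simp only [hF, hc0, hc1] at this
  norm_num at this
  linarith [this]


/-- If a convex function `w` on `ℝⁿ` is `C²` near the closed ball `B̄(x₀, κ)`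
with Hessian `≥ λ·Id` there and attains its global minimum at `x₀`, then any
convex function `w'` with `|w - w'| ≤ λκ²/16` on the closed ball attains its
global minimum at a point of the open ball `B(x₀, κ)`. -/
theorem stmt6 (n : ℕ) (hn : 1 ≤ n) (x₀ : EuclideanSpace ℝ (Fin n))
    (κ lam : ℝ) (hκ : 0 < κ) (hlam : 0 < lam)
    (w : EuclideanSpace ℝ (Fin n) → ℝ)
    (hwconv : ConvexOn ℝ Set.univ w)
    (hsmooth : ∃ U : Set (EuclideanSpace ℝ (Fin n)),
      IsOpen U ∧ closedBall x₀ κ ⊆ U ∧ ContDiffOn ℝ 2 w U)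
    (hhess : ∀ x ∈ closedBall x₀ κ, ∀ v : EuclideanSpace ℝ (Fin n),
      lam * ‖v‖ ^ 2 ≤ iteratedFDeriv ℝ 2 w x ![v, v])
    (hmin : ∀ x, w x₀ ≤ w x)
    (w' : EuclideanSpace ℝ (Fin n) → ℝ)
    (hw'conv : ConvexOn ℝ Set.univ w')
    (hclose : ∀ x ∈ closedBall x₀ κ, |w x - w' x| ≤ lam * κ ^ 2 / 16) :
    ∃ y ∈ ball x₀ κ, ∀ x, w' y ≤ w' x := by
  obtain ⟨U, hUopen, hUsub, hC2⟩ := hsmooth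
  have hsph : ∀ z, dist z x₀ = κ → w x₀ + lam * κ ^ 2 / 2 ≤ w z :=
    sphere_lb x₀ κ lam hκ hlam w U hUopen hUsub hC2 hhess hmin
  -- w' continuous
  have hw'cont : Continuous w' := by
    have := hw'conv.continuousOn isOpen_univ
    exact continuousOn_univ.mp this
  -- min on closed ball
  obtain ⟨y, hyB, hymin⟩ := (isCompact_closedBall x₀ κ).exists_isMinOn
    (nonempty_closedBall.2 hκ.le) hw'cont.continuousOn
  have hx₀B : x₀ ∈ closedBall x₀ κ := mem_closedBall_self hκ.le
  -- y is in the open ball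
  have hyball : y ∈ ball x₀ κ := by
    rw [mem_ball]
    rcases lt_or_eq_of_le (mem_closedBall.1 hyB) with h | h
    · exact h
    · exfalso
      have h1 := hsph y h
      have h2 := hclose y hyB
      have h3 := hclose x₀ hx₀B
      have h4 := hymin hx₀B
      obtain ⟨h2a, h2b⟩ := abs_le.1 h2
      obtain ⟨h3a, h3b⟩ := abs_le.1 h3
      simp only [Set.mem_setOf_eq] at h4
      nlinarith [mul_pos hlam (pow_pos hκ 2)]
  refine ⟨y, hyball, ?_⟩
  -- local min implies global min for convex functions
  have hlocal : IsLocalMin w' y := by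
    filter_upwards [isOpen_ball.mem_nhds hyball] with x hx
    exact hymin (ball_subset_closedBall hx)
  have := IsMinOn.of_isLocalMin_of_convex_univ hlocal hw'conv
  exact this
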